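/- Let s = {r_n}_{n∈ℤ} be a lacunary sequence of positive reals (r_{n+1}/r_n ≥ c for some fixed c > 1 and all n ∈ ℤ). For each d ≥ 1 let Q_d = (−1/2,1/2)^d be the open unit cube in ℝ^d, and let c_{s,d} denote the best constant in the weak type (1,1) inequality for the lacunary maximal operator M_{s,d,Q_d}. Then c_{s,d} ≤ c_{s,d+1} for every d ≥ 1. -/

import Mathlib

open MeasureTheory Set
open scoped ENNReal

/-- The open unit cube `Q_d = (-1/2, 1/2)^d` in `ℝ^d`. -/
def unitCube (d : ℕ) : Set (Fin d → ℝ) :=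
  Set.univ.pi fun _ : Fin d => Set.Ioo (-(1/2) : ℝ) (1/2)

/-- The lacunary maximal operator on `ℝ^d` associated to a sequence `s : ℤ → ℝ` of radii and
a "ball" `B`: `M_{s,d,B} f (x) = sup_{n ∈ ℤ} (1/(s n ^ d · λ^d(B))) ∫_{x + s n • B} |f|`. -/
noncomputable def lacMaxOp (d : ℕ) (s : ℤ → ℝ) (B : Set (Fin d → ℝ))
    (f : (Fin d → ℝ) → ℝ) (x : Fin d → ℝ) : ℝ≥0∞ :=
  ⨆ n : ℤ,
    (∫⁻ y in (fun b => x + s n • b) '' B, ENNReal.ofReal |f y| ∂volume) /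
      (ENNReal.ofReal (s n ^ d) * volume B)

/-- The best constant in the weak type `(1,1)` inequality for `lacMaxOp d s B`. -/
noncomputable def lacBestConst (d : ℕ) (s : ℤ → ℝ) (B : Set (Fin d → ℝ)) : ℝ :=
  sInf {c : ℝ | 0 < c ∧ ∀ f : (Fin d → ℝ) → ℝ, Integrable f volume → ∀ α : ℝ, 0 < α →
    ENNReal.ofReal α * volume {x | ENNReal.ofReal α < lacMaxOp d s B f x} ≤
      ENNReal.ofReal (c * ∫ x, |f x|)}

section Aux

open Metric Filter

lemma unitCube_eq_ball (m : ℕ) : unitCube m = Metric.ball (0 : Fin m → ℝ) (1/2) := by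
  rw [ball_pi _ (by norm_num : (0:ℝ) < 1/2)]
  unfold unitCube
  ext y
  simp [Real.ball_eq_Ioo]

lemma volume_unitCube (m : ℕ) : volume (unitCube m) = 1 := by
  rw [unitCube, volume_pi_pi]
  simp [Real.volume_Ioo]
  norm_num

lemma image_unitCube (m : ℕ) {r : ℝ} (hr : 0 < r) (x : Fin m → ℝ) :
    (fun b => x + r • b) '' unitCube m = Metric.ball x (r/2) := by
  rw [unitCube_eq_ball]
  have h1 : (fun b : Fin m → ℝ => x + r • b) = (fun y => x + y) ∘ (fun b => r • b) := rfl
  rw [h1, Set.image_comp, Set.image_smul, _root_.smul_ball (ne_of_gt hr), smul_zero]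
  have h2 : ‖r‖ * (1/2) = r/2 := by rw [Real.norm_of_nonneg hr.le]; ring
  rw [h2]
  ext y
  simp only [Set.mem_image, mem_ball, dist_eq_norm]
  constructor
  · rintro ⟨b, hb, rfl⟩; simpa [add_sub_cancel_left] using hb
  · intro h; exact ⟨y - x, by simpa using h, by abel⟩

lemma lacMaxOp_cube_eq (m : ℕ) (s : ℤ → ℝ) (hs_pos : ∀ n, 0 < s n)
    (f : (Fin m → ℝ) → ℝ) (x : Fin m → ℝ) :
    lacMaxOp m s (unitCube m) f x =
      ⨆ n : ℤ, (∫⁻ y in Metric.ball x (s n / 2), ENNReal.ofReal |f y| ∂volume) /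
        ENNReal.ofReal (s n ^ m) := by
  unfold lacMaxOp
  congr 1
  funext n
  rw [image_unitCube m (hs_pos n) x, volume_unitCube, mul_one]

/-- Witness extraction: a point in the superlevel set has a scale with bounded radius. -/
lemma witness {m : ℕ} (hm : 1 ≤ m) (s : ℤ → ℝ) (hs_pos : ∀ n, 0 < s n)
    {f : (Fin m → ℝ) → ℝ} (hf : Integrable f volume) {α : ℝ} (hα : 0 < α)
    {x : Fin m → ℝ}
    (hx : ENNReal.ofReal α <
      ⨆ n : ℤ, (∫⁻ y in Metric.ball x (s n / 2), ENNReal.ofReal |f y| ∂volume) /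
        ENNReal.ofReal (s n ^ m)) :
    ∃ n : ℤ, s n ≤ max 1 ((∫ x, |f x|) / α) ∧
      ENNReal.ofReal α * ENNReal.ofReal (s n ^ m) <
        ∫⁻ y in Metric.ball x (s n / 2), ENNReal.ofReal |f y| ∂volume := by
  set I : ℝ := ∫ x, |f x| with hIdef
  have hI0 : 0 ≤ I := integral_nonneg fun x => abs_nonneg _
  have hIlint : ∫⁻ y, ENNReal.ofReal |f y| ∂volume = ENNReal.ofReal I := by
    rw [hIdef, ofReal_integral_eq_lintegral_ofReal hf.abs
      (Filter.Eventually.of_forall fun x => abs_nonneg _)]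
  rw [lt_iSup_iff] at hx
  obtain ⟨n, hn⟩ := hx
  have hb0 : ENNReal.ofReal (s n ^ m) ≠ 0 := (ENNReal.ofReal_pos.2 (pow_pos (hs_pos n) m)).ne'
  have hkey : ENNReal.ofReal α * ENNReal.ofReal (s n ^ m) <
      ∫⁻ y in Metric.ball x (s n / 2), ENNReal.ofReal |f y| ∂volume :=
    (ENNReal.lt_div_iff_mul_lt (Or.inl hb0) (Or.inl ENNReal.ofReal_ne_top)).1 hn
  refine ⟨n, ?_, hkey⟩
  have h1 : ENNReal.ofReal α * ENNReal.ofReal (s n ^ m) < ENNReal.ofReal I :=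
    hkey.trans_le (by rw [← hIlint]; exact setLIntegral_le_lintegral _ _)
  rw [← ENNReal.ofReal_mul hα.le] at h1
  have h2 : α * s n ^ m < I := by
    by_contra h
    exact absurd (ENNReal.ofReal_le_ofReal (not_lt.1 h)) (not_le.2 h1)
  have h3 : s n ^ m ≤ I / α := by
    rw [le_div_iff₀ hα]; nlinarith
  rcases le_or_gt (s n) 1 with h | h
  · exact h.trans (le_max_left _ _)
  · calc s n ≤ s n ^ m := le_self_pow₀ h.le (by omega)
      _ ≤ I / α := h3
      _ ≤ max 1 (I/α) := le_max_right _ _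

end Aux

section PartI
open Metric Filter

lemma fourPow_mem (m : ℕ) (hm : 1 ≤ m) (s : ℤ → ℝ) (hs_pos : ∀ n, 0 < s n) :
    ((4:ℝ)^m) ∈ {c : ℝ | 0 < c ∧ ∀ f : (Fin m → ℝ) → ℝ, Integrable f volume → ∀ α : ℝ, 0 < α →
      ENNReal.ofReal α * volume {x | ENNReal.ofReal α < lacMaxOp m s (unitCube m) f x} ≤
        ENNReal.ofReal (c * ∫ x, |f x|)} := by
  classical
  refine ⟨by positivity, fun f hf α hα => ?_⟩
  set I : ℝ := ∫ x, |f x| with hIdef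
  have hI0 : 0 ≤ I := integral_nonneg fun x => abs_nonneg _
  have hIlint : ∫⁻ y, ENNReal.ofReal |f y| ∂volume = ENNReal.ofReal I := by
    rw [hIdef, ofReal_integral_eq_lintegral_ofReal hf.abs
      (Filter.Eventually.of_forall fun x => abs_nonneg _)]
  set S := {x | ENNReal.ofReal α < lacMaxOp m s (unitCube m) f x} with hSdef
  set R₁ : ℝ := max 1 (I / α) with hR₁
  set P : (Fin m → ℝ) → ℝ → Prop := fun x ρ => 0 < ρ ∧ 2*ρ ≤ R₁ ∧
    ENNReal.ofReal α * ENNReal.ofReal ((2*ρ)^m) <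
      ∫⁻ y in Metric.ball x ρ, ENNReal.ofReal |f y| ∂volume with hP
  have hex : ∀ x ∈ S, ∃ ρ, P x ρ := by
    intro x hx
    rw [hSdef, Set.mem_setOf_eq, lacMaxOp_cube_eq m s hs_pos] at hx
    obtain ⟨n, hn_le, hn_lt⟩ := witness hm s hs_pos hf hα hx
    refine ⟨s n / 2, by linarith [hs_pos n], by linarith, ?_⟩
    have h : 2 * (s n / 2) = s n := by ring
    rw [h]; exact hn_lt
  set r : (Fin m → ℝ) → ℝ := fun x => if h : ∃ ρ, P x ρ then h.choose else 0 with hr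
  have hrP : ∀ x ∈ S, P x (r x) := by
    intro x hx
    show P x (if h : ∃ ρ, P x ρ then h.choose else 0)
    rw [dif_pos (hex x hx)]
    exact (hex x hx).choose_spec
  obtain ⟨u, huS, hdisj, hcov⟩ :=
    Vitali.exists_disjoint_subfamily_covering_enlargement_closedBall S id r R₁
      (fun a ha => by have := (hrP a ha); nlinarith [this.1, this.2.1]) 4 (by norm_num)
  have hdisj' : u.PairwiseDisjoint fun a => Metric.ball (id a) (r a) :=
    hdisj.mono_on fun a ha => ball_subset_closedBall
  have hcount : u.Countable := hdisj'.countable_of_isOpen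
    (fun a _ => isOpen_ball) (fun a ha => by
      simp only [id, nonempty_ball]; exact (hrP a (huS ha)).1)
  have hScov : S ⊆ ⋃ b ∈ u, Metric.closedBall b (4 * r b) := by
    intro a ha
    obtain ⟨b, hb, hsub⟩ := hcov a ha
    exact Set.mem_biUnion hb (hsub (mem_closedBall_self (hrP a ha).1.le))
  haveI := hcount.to_subtype
  have h1 : volume S ≤ ∑' b : u, volume (Metric.closedBall (b:Fin m → ℝ) (4 * r b)) :=
    (measure_mono hScov).trans (measure_biUnion_le _ hcount _)
  have hvol : ∀ b ∈ u, volume (Metric.closedBall (b : Fin m → ℝ) (4 * r b)) =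
      ENNReal.ofReal ((4:ℝ)^m) * ENNReal.ofReal ((2 * r b)^m) := by
    intro b hb
    rw [Real.volume_pi_closedBall _ (by nlinarith [(hrP b (huS hb)).1] : (0:ℝ) ≤ 4 * r b)]
    rw [← ENNReal.ofReal_mul (by positivity)]
    rw [Fintype.card_fin]
    congr 1
    rw [← mul_pow]
    ring_nf
  calc ENNReal.ofReal α * volume S
      ≤ ENNReal.ofReal α * ∑' b : u, volume (Metric.closedBall (b:Fin m → ℝ) (4 * r b)) := by
        gcongr
    _ = ENNReal.ofReal ((4:ℝ)^m) * ∑' b : u, ENNReal.ofReal α * ENNReal.ofReal ((2 * r b)^m) := by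
        rw [← ENNReal.tsum_mul_left, ← ENNReal.tsum_mul_left]
        congr 1
        funext b
        rw [hvol b b.2]
        ring
    _ ≤ ENNReal.ofReal ((4:ℝ)^m) *
        ∑' b : u, ∫⁻ y in Metric.ball (b : Fin m → ℝ) (r b), ENNReal.ofReal |f y| ∂volume := by
        gcongr with b
        exact (hrP b (huS b.2)).2.2.le
    _ = ENNReal.ofReal ((4:ℝ)^m) *
        ∫⁻ y in ⋃ b : u, Metric.ball (b : Fin m → ℝ) (r b), ENNReal.ofReal |f y| ∂volume := by
        congr 1
        rw [lintegral_iUnion (s := fun b : ↑u => Metric.ball (b : Fin m → ℝ) (r b))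
          (fun b => measurableSet_ball)
          (fun (i j : ↑u) hij => hdisj' i.2 j.2 (fun h => hij (Subtype.ext h)))]
    _ ≤ ENNReal.ofReal ((4:ℝ)^m) * ∫⁻ y, ENNReal.ofReal |f y| ∂volume := by
        gcongr
        exact Measure.restrict_le_self
    _ = ENNReal.ofReal ((4:ℝ)^m * I) := by
        rw [hIlint, ← ENNReal.ofReal_mul (by positivity)]

end PartI

section PartII
open Metric Filter

noncomputable def eqv (d : ℕ) : (Fin (d+1) → ℝ) ≃ᵐ ℝ × (Fin d → ℝ) :=
  MeasurableEquiv.piFinSuccAbove (fun _ : Fin (d+1) => ℝ) (Fin.last d)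

lemma eqv_apply (d : ℕ) (z : Fin (d+1) → ℝ) :
    eqv d z = (z (Fin.last d), fun j => z j.castSucc) := by
  simp only [eqv, MeasurableEquiv.piFinSuccAbove_apply, Fin.insertNthEquiv,
    Fin.succAbove_last]
  exact Prod.ext rfl (funext fun j => congrArg z (Fin.succAbove_last_apply j))

lemma eqv_mp (d : ℕ) : MeasurePreserving (⇑(eqv d))
    (volume : Measure (Fin (d+1) → ℝ))
    ((volume : Measure ℝ).prod (volume : Measure (Fin d → ℝ))) := by
  have h := measurePreserving_piFinSuccAbove (fun _ : Fin (d+1) => (volume : Measure ℝ))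
    (Fin.last d)
  rw [← MeasureTheory.volume_pi, ← MeasureTheory.volume_pi] at h
  exact h

lemma eqv_symm_fst (d : ℕ) (w : ℝ × (Fin d → ℝ)) : (eqv d).symm w (Fin.last d) = w.1 := by
  have h := (eqv d).apply_symm_apply w
  rw [eqv_apply] at h
  exact congrArg Prod.fst h

lemma eqv_symm_castSucc (d : ℕ) (w : ℝ × (Fin d → ℝ)) (j : Fin d) :
    (eqv d).symm w j.castSucc = w.2 j := by
  have h := (eqv d).apply_symm_apply w
  rw [eqv_apply] at h
  exact congrFun (congrArg Prod.snd h) j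

lemma ballSplit (d : ℕ) (z : Fin (d+1) → ℝ) {ρ : ℝ} (hρ : 0 < ρ) :
    Metric.ball z ρ =
      eqv d ⁻¹' (Metric.ball (z (Fin.last d)) ρ ×ˢ Metric.ball (fun j => z j.castSucc) ρ) := by
  ext w
  simp only [Set.mem_preimage, eqv_apply, Set.mem_prod, mem_ball]
  rw [dist_pi_lt_iff hρ]
  constructor
  · intro h
    refine ⟨h (Fin.last d), ?_⟩
    rw [dist_pi_lt_iff hρ]
    exact fun j => h j.castSucc
  · rintro ⟨h1, h2⟩ i
    rw [dist_pi_lt_iff hρ] at h2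
    induction i using Fin.lastCases with
    | last => exact h1
    | cast j => exact h2 j

lemma lint_ball_split (d : ℕ) {ρ : ℝ} (hρ : 0 < ρ) (g : ℝ → ℝ) (hg : Measurable g)
    (hg0 : ∀ t, 0 ≤ g t) (f : (Fin d → ℝ) → ℝ) (hf : AEMeasurable (fun x => |f x|) volume)
    (z : Fin (d+1) → ℝ) :
    ∫⁻ y in Metric.ball z ρ,
        ENNReal.ofReal |g (y (Fin.last d)) * f (fun j => y j.castSucc)| ∂volume =
      (∫⁻ u in Metric.ball (z (Fin.last d)) ρ, ENNReal.ofReal (g u) ∂volume) *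
      ∫⁻ x in Metric.ball (fun j => z j.castSucc) ρ, ENNReal.ofReal |f x| ∂volume := by
  have hmap : Measure.map (⇑(eqv d).symm)
      ((volume : Measure ℝ).prod (volume : Measure (Fin d → ℝ)))
      = (volume : Measure (Fin (d+1) → ℝ)) :=
    (MeasurePreserving.symm (eqv d) (eqv_mp d)).map_eq
  rw [← hmap, Measure.restrict_map (eqv d).symm.measurable measurableSet_ball,
    lintegral_map_equiv]
  have hpre : ⇑(eqv d).symm ⁻¹' Metric.ball z ρ =
      Metric.ball (z (Fin.last d)) ρ ×ˢ Metric.ball (fun j => z j.castSucc) ρ := by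
    rw [ballSplit d z hρ, ← Set.preimage_comp]
    simp
  rw [hpre, ← Measure.prod_restrict]
  have hint : (fun w : ℝ × (Fin d → ℝ) =>
      ENNReal.ofReal |g ((eqv d).symm w (Fin.last d)) * f (fun j => (eqv d).symm w j.castSucc)|)
      = fun w : ℝ × (Fin d → ℝ) => ENNReal.ofReal (g w.1) * ENNReal.ofReal |f w.2| := by
    funext w
    have h1 : (fun j => (eqv d).symm w j.castSucc) = w.2 := funext fun j => eqv_symm_castSucc d w j
    rw [eqv_symm_fst, h1, abs_mul, abs_of_nonneg (hg0 _), ENNReal.ofReal_mul (hg0 _)]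
  rw [hint]
  exact lintegral_prod_mul (hg.ennreal_ofReal.aemeasurable) ((hf.ennreal_ofReal).restrict)


set_option maxHeartbeats 1000000 in
lemma step_mem (d : ℕ) (hd : 1 ≤ d) (s : ℤ → ℝ) (hs_pos : ∀ n, 0 < s n) (c : ℝ)
    (hc : 0 < c ∧ ∀ F : (Fin (d+1) → ℝ) → ℝ, Integrable F volume → ∀ α : ℝ, 0 < α →
      ENNReal.ofReal α * volume {z | ENNReal.ofReal α < lacMaxOp (d+1) s (unitCube (d+1)) F z} ≤
        ENNReal.ofReal (c * ∫ z, |F z|)) :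
    0 < c ∧ ∀ f : (Fin d → ℝ) → ℝ, Integrable f volume → ∀ α : ℝ, 0 < α →
      ENNReal.ofReal α * volume {x | ENNReal.ofReal α < lacMaxOp d s (unitCube d) f x} ≤
        ENNReal.ofReal (c * ∫ x, |f x|) := by
  classical
  refine ⟨hc.1, fun f hf α hα => ?_⟩
  set I : ℝ := ∫ x, |f x| with hIdef
  have hI0 : 0 ≤ I := integral_nonneg fun x => abs_nonneg _
  set R₀ : ℝ := max 1 (I / α) with hR₀def
  have hR₀1 : (1:ℝ) ≤ R₀ := le_max_left _ _
  have hR₀0 : (0:ℝ) < R₀ := by linarith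
  set A := {x | ENNReal.ofReal α < lacMaxOp d s (unitCube d) f x} with hA
  have key : ∀ k : ℕ, ENNReal.ofReal (α * (1+(k:ℝ)) / (R₀+1+(k:ℝ))) * volume A ≤
      ENNReal.ofReal (c * I) := by
    intro k
    set L : ℝ := R₀ + 1 + (k:ℝ) with hLdef
    have hk0 : (0:ℝ) ≤ (k:ℝ) := Nat.cast_nonneg k
    have hL0 : 0 < L := by rw [hLdef]; linarith
    set g : ℝ → ℝ := (Set.Ioo (0:ℝ) L).indicator (fun _ => 1/L) with hg
    have hg_nonneg : ∀ t, 0 ≤ g t := fun t =>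
      Set.indicator_nonneg (fun _ _ => by positivity) t
    have hg_meas : Measurable g := measurable_const.indicator measurableSet_Ioo
    have hg_int : Integrable g volume := by
      rw [hg, integrable_indicator_iff measurableSet_Ioo]
      exact integrableOn_const (by rw [Real.volume_Ioo]; exact ENNReal.ofReal_ne_top)
    have hg_L1 : ∫ t, g t = 1 := by
      rw [hg, integral_indicator_const _ measurableSet_Ioo, Real.volume_real_Ioo_of_le (by linarith), smul_eq_mul, sub_zero]
      field_simp
    set F : (Fin (d+1) → ℝ) → ℝ := fun z => g (z (Fin.last d)) * f (fun j => z j.castSucc)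
      with hF
    have hFcomp : F = (fun w : ℝ × (Fin d → ℝ) => g w.1 * f w.2) ∘ (eqv d) := by
      funext z
      simp only [hF, Function.comp_apply, eqv_apply]
    have hGint : Integrable (fun w : ℝ × (Fin d → ℝ) => g w.1 * f w.2)
        ((volume : Measure ℝ).prod (volume : Measure (Fin d → ℝ))) := hg_int.mul_prod hf
    have hFint : Integrable F volume := by
      rw [hFcomp]
      exact ((eqv_mp d).integrable_comp_emb (eqv d).measurableEmbedding).2 hGint
    have hFabs : ∫ z, |F z| = I := by
      have habs : (fun z => |F z|) =
          (fun w : ℝ × (Fin d → ℝ) => |g w.1| * |f w.2|) ∘ (eqv d) := by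
        funext z
        simp only [hF, Function.comp_apply, eqv_apply, abs_mul]
      have h4 : ∫ z, |F z| = ∫ w : ℝ × (Fin d → ℝ), |g w.1| * |f w.2|
          ∂((volume : Measure ℝ).prod (volume : Measure (Fin d → ℝ))) := by
        rw [habs]
        exact (eqv_mp d).integral_comp (eqv d).measurableEmbedding
          (fun w : ℝ × (Fin d → ℝ) => |g w.1| * |f w.2|)
      rw [h4, integral_prod_mul (fun t : ℝ => |g t|) (fun x : Fin d → ℝ => |f x|)]
      have h5 : ∫ t, |g t| = 1 := by
        rw [← hg_L1]
        congr 1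
        funext t
        exact abs_of_nonneg (hg_nonneg t)
      rw [h5, one_mul, hIdef]
    have hstep := hc.2 F hFint (α / L) (by positivity)
    rw [hFabs] at hstep
    set T := (Set.Icc (R₀/2) (L - R₀/2)) ×ˢ A with hT
    have hsub : (eqv d) ⁻¹' T ⊆
        {z | ENNReal.ofReal (α/L) < lacMaxOp (d+1) s (unitCube (d+1)) F z} := by
      intro z hz
      rw [Set.mem_preimage, hT, eqv_apply, Set.mem_prod] at hz
      obtain ⟨ht, hxA⟩ := hz
      rw [hA, Set.mem_setOf_eq, lacMaxOp_cube_eq d s hs_pos] at hxA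
      obtain ⟨n, hn_le, hn_lt⟩ := witness hd s hs_pos hf hα hxA
      rw [Set.mem_setOf_eq, lacMaxOp_cube_eq (d+1) s hs_pos]
      refine lt_of_lt_of_le ?_ (le_iSup _ n)
      have hρ : 0 < s n / 2 := by linarith [hs_pos n]
      have hcont : Metric.ball (z (Fin.last d)) (s n / 2) ⊆ Set.Ioo (0:ℝ) L := by
        rw [Real.ball_eq_Ioo]
        apply Set.Ioo_subset_Ioo
        · have := ht.1; linarith
        · have := ht.2; linarith
      have hgball : ∫⁻ u in Metric.ball (z (Fin.last d)) (s n / 2),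
          ENNReal.ofReal (g u) ∂volume = ENNReal.ofReal (s n / L) := by
        rw [setLIntegral_congr_fun measurableSet_ball
          (fun u hu => by
            rw [hg, Set.indicator_of_mem (hcont hu)])]
        rw [setLIntegral_const, Real.volume_ball, ← ENNReal.ofReal_mul (by positivity)]
        congr 1
        field_simp
      have hnum : ∫⁻ y in Metric.ball z (s n / 2), ENNReal.ofReal |F y| ∂volume
          = ENNReal.ofReal (s n / L) *
            ∫⁻ y in Metric.ball (fun j => z j.castSucc) (s n / 2),
              ENNReal.ofReal |f y| ∂volume := by
        have h5 := lint_ball_split d hρ g hg_meas hg_nonneg f hf.abs.aemeasurable z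
        rw [hgball] at h5
        simp only [hF]
        exact h5
      rw [hnum]
      have hb0 : ENNReal.ofReal (s n ^ (d+1)) ≠ 0 :=
        (ENNReal.ofReal_pos.2 (pow_pos (hs_pos n) _)).ne'
      rw [ENNReal.lt_div_iff_mul_lt (Or.inl hb0) (Or.inl ENNReal.ofReal_ne_top)]
      have heq : ENNReal.ofReal (α/L) * ENNReal.ofReal (s n ^ (d+1)) =
          ENNReal.ofReal (s n / L) * (ENNReal.ofReal α * ENNReal.ofReal (s n ^ d)) := by
        rw [← ENNReal.ofReal_mul (div_nonneg hα.le hL0.le), ← ENNReal.ofReal_mul hα.le,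
          ← ENNReal.ofReal_mul (div_nonneg (hs_pos n).le hL0.le)]
        congr 1
        field_simp
        ring
      rw [heq]
      simpa only [mul_comm] using (ENNReal.mul_lt_mul_left
        ((ENNReal.ofReal_pos.2 (div_pos (hs_pos n) hL0)).ne')
        ENNReal.ofReal_ne_top hn_lt)
    have hTvol : ENNReal.ofReal (L - R₀) * volume A ≤ volume ((eqv d) ⁻¹' T) := by
      have hmap : Measure.map (⇑(eqv d).symm)
          ((volume : Measure ℝ).prod (volume : Measure (Fin d → ℝ))) = volume :=
        (MeasurePreserving.symm (eqv d) (eqv_mp d)).map_eq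
      have h2 : ((volume : Measure ℝ).prod (volume : Measure (Fin d → ℝ))) T ≤
          volume ((eqv d) ⁻¹' T) := by
        have h3 : (eqv d).symm ⁻¹' ((eqv d) ⁻¹' T) = T := by
          rw [← Set.preimage_comp]
          simp
        calc ((volume : Measure ℝ).prod (volume : Measure (Fin d → ℝ))) T
            = ((volume : Measure ℝ).prod (volume : Measure (Fin d → ℝ)))
              ((eqv d).symm ⁻¹' ((eqv d) ⁻¹' T)) := by rw [h3]
          _ ≤ Measure.map (⇑(eqv d).symm)
              ((volume : Measure ℝ).prod (volume : Measure (Fin d → ℝ)))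
              ((eqv d) ⁻¹' T) :=
            Measure.le_map_apply (eqv d).symm.measurable.aemeasurable _
          _ = volume ((eqv d) ⁻¹' T) := by rw [hmap]
      rw [hT, Measure.prod_prod, Real.volume_Icc] at h2
      calc ENNReal.ofReal (L - R₀) * volume A
          = ENNReal.ofReal (L - R₀/2 - R₀/2) * volume A := by ring_nf
        _ ≤ volume ((eqv d) ⁻¹' T) := h2
    show ENNReal.ofReal (α * (1+(k:ℝ)) / L) * volume A ≤ ENNReal.ofReal (c * I)
    have h6 : α * (1+(k:ℝ)) / L = α / L * (L - R₀) := by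
      have hne : L ≠ 0 := ne_of_gt hL0
      rw [hLdef] at hne ⊢
      field_simp
      try ring
      try tauto
    rw [h6, ENNReal.ofReal_mul (div_nonneg hα.le hL0.le), mul_assoc]
    calc ENNReal.ofReal (α/L) * (ENNReal.ofReal (L - R₀) * volume A)
        ≤ ENNReal.ofReal (α/L) * volume ((eqv d) ⁻¹' T) := mul_le_mul_right hTvol _
      _ ≤ ENNReal.ofReal (α/L) *
          volume {z | ENNReal.ofReal (α/L) < lacMaxOp (d+1) s (unitCube (d+1)) F z} :=
            mul_le_mul_right (measure_mono hsub) _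
      _ ≤ ENNReal.ofReal (c * I) := hstep
  have hlim : Tendsto (fun k : ℕ => ENNReal.ofReal (α * (1+(k:ℝ)) / (R₀+1+(k:ℝ))) * volume A)
      atTop (nhds (ENNReal.ofReal α * volume A)) := by
    apply ENNReal.Tendsto.mul_const _ (Or.inl (ENNReal.ofReal_pos.2 hα).ne')
    apply ENNReal.tendsto_ofReal
    have h1 : Tendsto (fun k : ℕ => (R₀ + 1 + (k:ℝ))) atTop atTop :=
      tendsto_atTop_add_const_left _ _ tendsto_natCast_atTop_atTop
    have h2 : Tendsto (fun k : ℕ => (α * R₀) * (R₀+1+(k:ℝ))⁻¹) atTop (nhds 0) := by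
      simpa using h1.inv_tendsto_atTop.const_mul (α * R₀)
    have h3 : (fun k : ℕ => α * (1+(k:ℝ))/(R₀+1+(k:ℝ))) =
        fun k : ℕ => α - (α * R₀) * (R₀+1+(k:ℝ))⁻¹ := by
      funext k
      have hk : (R₀+1+(k:ℝ)) ≠ 0 := by positivity
      field_simp
      ring
    rw [h3]
    simpa using tendsto_const_nhds.sub h2
  exact le_of_tendsto hlim (Filter.Eventually.of_forall key)

end PartII

/-- Let `s = {r_n}_{n∈ℤ}` be a lacunary sequence of positive reals
(`r_{n+1}/r_n ≥ c` for some fixed `c > 1` and all `n ∈ ℤ`). With `c_{s,d}` the best constant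
in the weak type `(1,1)` inequality for the lacunary maximal operator associated to the open
unit cube `Q_d = (-1/2,1/2)^d`, one has `c_{s,d} ≤ c_{s,d+1}` for every `d ≥ 1`. -/
theorem lacBestConst_cube_mono (s : ℤ → ℝ) (hs_pos : ∀ n, 0 < s n)
    (hs_lac : ∃ c : ℝ, 1 < c ∧ ∀ n : ℤ, c ≤ s (n + 1) / s n)
    (d : ℕ) (hd : 1 ≤ d) :
    lacBestConst d s (unitCube d) ≤ lacBestConst (d + 1) s (unitCube (d + 1)) := by
  apply csInf_le_csInf
  · exact ⟨0, fun c hc => hc.1.le⟩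
  · exact ⟨(4:ℝ)^(d+1), fourPow_mem (d+1) (by omega) s hs_pos⟩
  · intro c hc
    exact step_mem d hd s hs_pos c hc
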